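/- Let α, β, γ, δ be homeomorphisms of ℝ² with: β commuting with α, γ, δ; α⁶ γ α⁻⁶ = γ⁻¹; α⁶ δ α⁻⁶ = δ⁻¹; the elements g_k = α^k δ⁻² γ δ² α⁻^k (0 ≤ k ≤ 11) pairwise commuting; and β = g₀² g₁² ⋯ g₁₁². Then for any faithful action of the group H = ⟨α, β, γ, δ⟩ on ℝ by orientation-preserving homeomorphisms and any connected component I of ℝ \ Fix(α), the set Fix(β) ∩ I is infinite. -/

import Mathlib

open Set

private lemma oi_apply_inv_apply (f : ℝ ≃o ℝ) (z : ℝ) : f (f⁻¹ z) = z :=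
  f.apply_symm_apply z

private lemma oi_inv_apply_apply (f : ℝ ≃o ℝ) (z : ℝ) : f⁻¹ (f z) = z :=
  f.symm_apply_apply z

private lemma oi_mul_apply (f g : ℝ ≃o ℝ) (z : ℝ) : (f * g) z = f (g z) := rfl

private lemma oi_one_apply (z : ℝ) : (1 : ℝ ≃o ℝ) z = z := rfl

private lemma oi_sq_fix (f : ℝ ≃o ℝ) {x : ℝ} (h : f (f x) = x) : f x = x := by
  rcases lt_trichotomy (f x) x with hlt | heq | hgt
  · have h2 := f.strictMono hlt
    rw [h] at h2
    exact absurd (hlt.trans h2) (lt_irrefl _)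
  · exact heq
  · have h2 := f.strictMono hgt
    rw [h] at h2
    exact absurd (hgt.trans h2) (lt_irrefl _)

private lemma klein_fix (F C : ℝ ≃o ℝ) (e1 : ∀ z, F (C z) = C⁻¹ (F z))
    (e2 : ∀ z, F (C⁻¹ z) = C (F z)) {x : ℝ} (hx : F x = x) : C x = x := by
  have h1 : F (C x) = C⁻¹ x := by rw [e1, hx]
  have h2 : F (F (C x)) = C x := by rw [h1, e2, hx]
  have h3 : F (C x) = C x := oi_sq_fix F h2
  have h4 : C⁻¹ x = C x := by rw [← h1, h3]
  have h5 : C (C x) = x := by rw [← h4]; exact C.apply_symm_apply x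
  exact oi_sq_fix C h5

private lemma step_fix {I : Set ℝ} (hI : I.OrdConnected) (g : ℝ ≃o ℝ)
    {a b : ℝ} (ha : a ∈ I) (hb : b ∈ I) (hgb : g b = b) :
    ∃ q ∈ I, g q = q ∧
      ∀ h : ℝ ≃o ℝ, h a = a → (∀ z, h (g z) = g (h z)) → h q = q := by
  by_cases hga : g a = a
  · exact ⟨a, ha, hga, fun h hha _ => hha⟩
  have hbne : b ≠ a := fun e => hga (e ▸ hgb)
  have fact1 : ∀ (h : ℝ ≃o ℝ), (∀ z, h (g z) = g (h z)) →
      ∀ z, g z = z → g (h z) = h z := by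
    intro h hcom z hz
    rw [← hcom z, hz]
  have fact2 : ∀ (h : ℝ ≃o ℝ), (∀ z, h (g z) = g (h z)) →
      ∀ z, g z = z → g (h⁻¹ z) = h⁻¹ z := by
    intro h hcom z hz
    apply h.injective
    rw [hcom, oi_apply_inv_apply, hz]
  have hinva : ∀ (h : ℝ ≃o ℝ), h a = a → h⁻¹ a = a := by
    intro h hha
    apply h.injective
    rw [oi_apply_inv_apply, hha]
  rcases hbne.lt_or_gt with hba | hab
  · -- b < a : take sSup of fixed points of g below a
    have hKc : IsClosed {y : ℝ | y ≤ a ∧ g y = y} :=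
      (isClosed_le continuous_id continuous_const).inter
        (isClosed_eq g.continuous continuous_id)
    have hKne : Set.Nonempty {y : ℝ | y ≤ a ∧ g y = y} := ⟨b, hba.le, hgb⟩
    have hKbd : BddAbove {y : ℝ | y ≤ a ∧ g y = y} := ⟨a, fun y hy => hy.1⟩
    have hqK : sSup {y : ℝ | y ≤ a ∧ g y = y} ∈ {y : ℝ | y ≤ a ∧ g y = y} :=
      hKc.csSup_mem hKne hKbd
    refine ⟨sSup {y : ℝ | y ≤ a ∧ g y = y},
      hI.out hb ha ⟨le_csSup hKbd ⟨hba.le, hgb⟩, hqK.1⟩, hqK.2, ?_⟩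
    intro h hha hcom
    have hmem : h (sSup {y : ℝ | y ≤ a ∧ g y = y}) ∈ {y : ℝ | y ≤ a ∧ g y = y} :=
      ⟨by have hm := h.monotone hqK.1; rwa [hha] at hm, fact1 h hcom _ hqK.2⟩
    have hmem' : h⁻¹ (sSup {y : ℝ | y ≤ a ∧ g y = y}) ∈ {y : ℝ | y ≤ a ∧ g y = y} :=
      ⟨by have hm := (h⁻¹ : ℝ ≃o ℝ).monotone hqK.1; rwa [hinva h hha] at hm,
        fact2 h hcom _ hqK.2⟩
    have h1 := le_csSup hKbd hmem
    have h2 := le_csSup hKbd hmem'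
    have h3 := h.monotone h2
    rw [oi_apply_inv_apply] at h3
    exact le_antisymm h1 h3
  · -- a < b : take sInf of fixed points of g above a
    have hKc : IsClosed {y : ℝ | a ≤ y ∧ g y = y} :=
      (isClosed_le continuous_const continuous_id).inter
        (isClosed_eq g.continuous continuous_id)
    have hKne : Set.Nonempty {y : ℝ | a ≤ y ∧ g y = y} := ⟨b, hab.le, hgb⟩
    have hKbd : BddBelow {y : ℝ | a ≤ y ∧ g y = y} := ⟨a, fun y hy => hy.1⟩
    have hqK : sInf {y : ℝ | a ≤ y ∧ g y = y} ∈ {y : ℝ | a ≤ y ∧ g y = y} :=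
      hKc.csInf_mem hKne hKbd
    refine ⟨sInf {y : ℝ | a ≤ y ∧ g y = y},
      hI.out ha hb ⟨hqK.1, csInf_le hKbd ⟨hab.le, hgb⟩⟩, hqK.2, ?_⟩
    intro h hha hcom
    have hmem : h (sInf {y : ℝ | a ≤ y ∧ g y = y}) ∈ {y : ℝ | a ≤ y ∧ g y = y} :=
      ⟨by have hm := h.monotone hqK.1; rwa [hha] at hm, fact1 h hcom _ hqK.2⟩
    have hmem' : h⁻¹ (sInf {y : ℝ | a ≤ y ∧ g y = y}) ∈ {y : ℝ | a ≤ y ∧ g y = y} :=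
      ⟨by have hm := (h⁻¹ : ℝ ≃o ℝ).monotone hqK.1; rwa [hinva h hha] at hm,
        fact2 h hcom _ hqK.2⟩
    have h1 := csInf_le hKbd hmem
    have h2 := csInf_le hKbd hmem'
    have h3 := h.monotone h2
    rw [oi_apply_inv_apply] at h3
    exact le_antisymm h3 h1

private lemma oi_list_prod_fix (q : ℝ) :
    ∀ l : List (ℝ ≃o ℝ), (∀ f ∈ l, f q = q) → l.prod q = q := by
  intro l
  induction l with
  | nil => intro _; rfl
  | cons f t ih =>
    intro h
    rw [List.prod_cons]
    show f (t.prod q) = q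
    rw [ih fun g hg => h g (List.mem_cons_of_mem f hg), h f List.mem_cons_self]

open Set in
/-- Let `α, β, γ, δ` generate a group `H` with: `β` central among the generators,
`α⁶ γ α⁻⁶ = γ⁻¹`, `α⁶ δ α⁻⁶ = δ⁻¹`, the elements `g_k = αᵏ δ⁻² γ δ² α⁻ᵏ`
(`0 ≤ k ≤ 11`) pairwise commuting, and `β = g₀² g₁² ⋯ g₁₁²`. Then for any faithful
action of `H` on ℝ by orientation-preserving homeomorphisms and any connected component
`I` of `ℝ \ Fix α`, the set `Fix β ∩ I` is infinite. -/
theorem stmt_18 {G : Type*} [Group G] (α β γ δ : G)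
    (gk : ℕ → G)
    (hgk : ∀ k : ℕ, gk k = α ^ k * δ⁻¹ ^ 2 * γ * δ ^ 2 * (α ^ k)⁻¹)
    (hβα : Commute β α) (hβγ : Commute β γ) (hβδ : Commute β δ)
    (hγrel : α ^ 6 * γ * (α ^ 6)⁻¹ = γ⁻¹)
    (hδrel : α ^ 6 * δ * (α ^ 6)⁻¹ = δ⁻¹)
    (hcomm : ∀ k l : ℕ, k ≤ 11 → l ≤ 11 → Commute (gk k) (gk l))
    (hβ : β = ((List.range 12).map fun k => gk k ^ 2).prod) :
    ∀ ρ : (Subgroup.closure {α, β, γ, δ} : Subgroup G) →* (ℝ ≃o ℝ),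
      Function.Injective ρ →
      ∀ a b : (Subgroup.closure {α, β, γ, δ} : Subgroup G),
        (a : G) = α → (b : G) = β →
        ∀ x : ℝ, ρ a x ≠ x →
          {y ∈ connectedComponentIn {z : ℝ | ρ a z ≠ z} x | ρ b y = y}.Infinite := by
  intro ρ _hinj a b ha hb x hx
  -- memberships of the generators in the closure
  have hαH : α ∈ Subgroup.closure ({α, β, γ, δ} : Set G) := Subgroup.subset_closure (by simp)
  have hγH : γ ∈ Subgroup.closure ({α, β, γ, δ} : Set G) := Subgroup.subset_closure (by simp)
  have hδH : δ ∈ Subgroup.closure ({α, β, γ, δ} : Set G) := Subgroup.subset_closure (by simp)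
  have hgkmem : ∀ k : ℕ, gk k ∈ Subgroup.closure ({α, β, γ, δ} : Set G) := by
    intro k
    rw [hgk]
    exact mul_mem (mul_mem (mul_mem (mul_mem (pow_mem hαH k) (pow_mem (inv_mem hδH) 2)) hγH)
      (pow_mem hδH 2)) (inv_mem (pow_mem hαH k))
  obtain ⟨cH, hcHv⟩ : ∃ c' : (Subgroup.closure ({α, β, γ, δ} : Set G)), (c' : G) = γ :=
    ⟨⟨γ, hγH⟩, rfl⟩
  obtain ⟨dH, hdHv⟩ : ∃ d' : (Subgroup.closure ({α, β, γ, δ} : Set G)), (d' : G) = δ :=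
    ⟨⟨δ, hδH⟩, rfl⟩
  obtain ⟨gH, hgHv⟩ : ∃ g' : ℕ → (Subgroup.closure ({α, β, γ, δ} : Set G)),
      ∀ k, (g' k : G) = gk k := ⟨fun k => ⟨gk k, hgkmem k⟩, fun k => rfl⟩
  -- subgroup-level relations
  have relCH : a ^ 6 * cH * (a ^ 6)⁻¹ = cH⁻¹ := by
    apply Subtype.ext
    simpa [ha, hcHv] using hγrel
  have relDH : a ^ 6 * dH * (a ^ 6)⁻¹ = dH⁻¹ := by
    apply Subtype.ext
    simpa [ha, hdHv] using hδrel
  have conjH : ∀ k : ℕ, gH k = (a ^ k * dH⁻¹ ^ 2) * cH * (a ^ k * dH⁻¹ ^ 2)⁻¹ := by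
    intro k
    apply Subtype.ext
    simp only [Subgroup.coe_mul, Subgroup.coe_inv, SubmonoidClass.coe_pow, ha, hcHv, hdHv,
      hgHv, hgk]
    group
  have commH : ∀ k l : ℕ, k ≤ 11 → l ≤ 11 → gH k * gH l = gH l * gH k := by
    intro k l hk hl
    apply Subtype.ext
    simpa [hgHv] using (hcomm k l hk hl).eq
  have commBAH : b * a = a * b := by
    apply Subtype.ext
    simpa [ha, hb] using hβα.eq
  have hbprodH : b = ((List.range 12).map fun k => gH k ^ 2).prod := by
    apply Subtype.ext
    have hcoe : ((((List.range 12).map fun k => gH k ^ 2).prod :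
        (Subgroup.closure ({α, β, γ, δ} : Set G))) : G)
        = ((List.range 12).map fun k => gk k ^ 2).prod := by
      simp only [Subgroup.val_list_prod, List.map_map]
      have hfun : (Subtype.val ∘ fun k => gH k ^ 2 :
          ℕ → G) = fun k => gk k ^ 2 := by
        funext k
        simp [Function.comp, hgHv]
      rw [hfun]
    rw [hcoe, hb]
    exact hβ
  -- the support of ρ a and the component of x
  set S : Set ℝ := {z : ℝ | ρ a z ≠ z} with hSdef
  set I : Set ℝ := connectedComponentIn S x with hIdef
  have hxS : x ∈ S := hx
  have hxI : x ∈ I := by rw [hIdef]; exact mem_connectedComponentIn hxS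
  -- "good" maps: fix every fixed point of ρ a
  have goodA : ∀ z, ρ a z = z → ρ a z = z := fun _ h => h
  have goodMul : ∀ f g' : ℝ ≃o ℝ, (∀ z, ρ a z = z → f z = z) → (∀ z, ρ a z = z → g' z = z) →
      ∀ z, ρ a z = z → (f * g') z = z := by
    intro f g' hf hg' z hz
    rw [oi_mul_apply, hg' z hz]
    exact hf z hz
  have goodInv : ∀ f : ℝ ≃o ℝ, (∀ z, ρ a z = z → f z = z) →
      ∀ z, ρ a z = z → (f⁻¹ : ℝ ≃o ℝ) z = z := by
    intro f hf z hz
    apply f.injective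
    rw [oi_apply_inv_apply, hf z hz]
  have goodPow : ∀ f : ℝ ≃o ℝ, (∀ z, ρ a z = z → f z = z) →
      ∀ n : ℕ, ∀ z, ρ a z = z → (f ^ n) z = z := by
    intro f hf n
    induction n with
    | zero => intro z _; rw [pow_zero]; exact oi_one_apply z
    | succ n ih =>
      rw [pow_succ]
      exact goodMul _ _ ih hf
  -- good maps preserve I
  have memI : ∀ g' : ℝ ≃o ℝ, (∀ z, ρ a z = z → g' z = z) → ∀ y, y ∈ I → g' y ∈ I := by
    intro g' hg' y hy
    by_cases hgy : g' y = y
    · rwa [hgy]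
    rcases lt_or_gt_of_ne hgy with hlt | hgt
    · have hsub : Icc (g' y) y ⊆ S := by
        intro w hw
        by_contra hws
        have hAw : ρ a w = w := not_not.mp hws
        have hgw : g' w = w := hg' w hAw
        rcases eq_or_lt_of_le hw.2 with heq | hlt2
        · exact hgy (by rw [← heq, hgw, heq])
        · have := g'.strictMono hlt2
          rw [hgw] at this
          exact absurd (lt_of_le_of_lt hw.1 this) (lt_irrefl _)
      have hmem : g' y ∈ connectedComponentIn S y :=
        isPreconnected_Icc.subset_connectedComponentIn ⟨hlt.le, le_rfl⟩ hsub ⟨le_rfl, hlt.le⟩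
      rw [hIdef] at hy ⊢
      rw [connectedComponentIn_eq hy]
      exact hmem
    · have hsub : Icc y (g' y) ⊆ S := by
        intro w hw
        by_contra hws
        have hAw : ρ a w = w := not_not.mp hws
        have hgw : g' w = w := hg' w hAw
        rcases eq_or_lt_of_le hw.1 with heq | hlt2
        · exact hgy (by rw [heq, hgw, ← heq])
        · have := g'.strictMono hlt2
          rw [hgw] at this
          exact absurd (lt_of_lt_of_le this hw.2) (lt_irrefl _)
      have hmem : g' y ∈ connectedComponentIn S y :=
        isPreconnected_Icc.subset_connectedComponentIn ⟨le_rfl, hgt.le⟩ hsub ⟨hgt.le, le_rfl⟩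
      rw [hIdef] at hy ⊢
      rw [connectedComponentIn_eq hy]
      exact hmem
  -- pointwise forms of the Klein relation
  have mkE : ∀ c' : ℝ ≃o ℝ, ((ρ a) ^ 6 * c' * ((ρ a) ^ 6)⁻¹ = c'⁻¹) →
      (∀ z, ((ρ a) ^ 6) (c' z) = c'⁻¹ (((ρ a) ^ 6) z)) ∧
      (∀ z, ((ρ a) ^ 6) ((c'⁻¹ : ℝ ≃o ℝ) z) = c' (((ρ a) ^ 6) z)) := by
    intro c' hrel
    have hrel2 : (ρ a) ^ 6 * c'⁻¹ * ((ρ a) ^ 6)⁻¹ = c' := by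
      have hh : (ρ a) ^ 6 * c'⁻¹ * ((ρ a) ^ 6)⁻¹ = ((ρ a) ^ 6 * c' * ((ρ a) ^ 6)⁻¹)⁻¹ := by
        rw [mul_inv_rev, mul_inv_rev, inv_inv, mul_assoc]
      rw [hh, hrel, inv_inv]
    constructor
    · intro z
      have h12 : (ρ a) ^ 6 * c' = c'⁻¹ * (ρ a) ^ 6 := mul_inv_eq_iff_eq_mul.mp hrel
      rw [← oi_mul_apply, h12, oi_mul_apply]
    · intro z
      have h21 : (ρ a) ^ 6 * c'⁻¹ = c' * (ρ a) ^ 6 := mul_inv_eq_iff_eq_mul.mp hrel2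
      rw [← oi_mul_apply, h21, oi_mul_apply]
  have relCρ : (ρ a) ^ 6 * ρ cH * ((ρ a) ^ 6)⁻¹ = (ρ cH)⁻¹ := by
    have := congrArg ρ relCH
    simpa using this
  have relDρ : (ρ a) ^ 6 * ρ dH * ((ρ a) ^ 6)⁻¹ = (ρ dH)⁻¹ := by
    have := congrArg ρ relDH
    simpa using this
  obtain ⟨e1C, e2C⟩ := mkE (ρ cH) relCρ
  obtain ⟨e1D, e2D⟩ := mkE (ρ dH) relDρ
  have good6 : ∀ z, ρ a z = z → ((ρ a) ^ 6) z = z := goodPow _ goodA 6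
  have goodD : ∀ z, ρ a z = z → ρ dH z = z := fun z hz =>
    klein_fix ((ρ a) ^ 6) (ρ dH) e1D e2D (good6 z hz)
  -- ρ cH has a fixed point in I
  have hCfix : ∃ e ∈ I, ρ cH e = e := by
    by_contra hcon
    push_neg at hcon
    have hU : IsOpen {y : ℝ | ρ cH y < y} := isOpen_lt (ρ cH).continuous continuous_id
    have hV : IsOpen {y : ℝ | y < ρ cH y} := isOpen_lt continuous_id (ρ cH).continuous
    have hdisj : Disjoint {y : ℝ | ρ cH y < y} {y : ℝ | y < ρ cH y} := by
      rw [Set.disjoint_left]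
      intro y h1 h2
      have h1' : ρ cH y < y := h1
      have h2' : y < ρ cH y := h2
      exact lt_asymm h1' h2'

    have hcover : I ⊆ {y : ℝ | ρ cH y < y} ∪ {y : ℝ | y < ρ cH y} := fun y hy =>
      (hcon y hy).lt_or_gt
    have hpre : IsPreconnected I := by
      rw [hIdef]; exact isPreconnected_connectedComponentIn
    have hFinvI : (((ρ a) ^ 6)⁻¹ : ℝ ≃o ℝ) x ∈ I := memI _ (goodInv _ good6) x hxI
    rcases hpre.subset_or_subset hU hV hdisj hcover with hsub | hsub
    · have h1 : ρ cH x < x := hsub hxI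
      have h2 : ρ cH ((((ρ a) ^ 6)⁻¹ : ℝ ≃o ℝ) x) < (((ρ a) ^ 6)⁻¹ : ℝ ≃o ℝ) x := hsub hFinvI
      have h3 := ((ρ a) ^ 6).strictMono h2
      rw [e1C, oi_apply_inv_apply] at h3
      have h4 := ((ρ cH)⁻¹ : ℝ ≃o ℝ).strictMono h1
      rw [show ((ρ cH)⁻¹ : ℝ ≃o ℝ) (ρ cH x) = x from (ρ cH).symm_apply_apply x] at h4
      exact absurd h3 (not_lt.2 h4.le)
    · have h1 : x < ρ cH x := hsub hxI
      have h2 : (((ρ a) ^ 6)⁻¹ : ℝ ≃o ℝ) x < ρ cH ((((ρ a) ^ 6)⁻¹ : ℝ ≃o ℝ) x) := hsub hFinvI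
      have h3 := ((ρ a) ^ 6).strictMono h2
      rw [e1C, oi_apply_inv_apply] at h3
      have h4 := ((ρ cH)⁻¹ : ℝ ≃o ℝ).strictMono h1
      rw [show ((ρ cH)⁻¹ : ℝ ≃o ℝ) (ρ cH x) = x from (ρ cH).symm_apply_apply x] at h4
      exact absurd h3 (not_lt.2 h4.le)
  -- each ρ (gH k) has a fixed point in I
  have hGfix : ∀ k : ℕ, ∃ e' ∈ I, ρ (gH k) e' = e' := by
    intro k
    obtain ⟨e, heI, hce⟩ := hCfix
    have goodW : ∀ z, ρ a z = z → ((ρ a) ^ k * ((ρ dH)⁻¹ : ℝ ≃o ℝ) ^ 2) z = z :=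
      goodMul _ _ (goodPow _ goodA k) (goodPow _ (goodInv _ goodD) 2)
    refine ⟨((ρ a) ^ k * ((ρ dH)⁻¹ : ℝ ≃o ℝ) ^ 2) e, memI _ goodW e heI, ?_⟩
    have hconj : ρ (gH k) = ((ρ a) ^ k * (ρ dH)⁻¹ ^ 2) * ρ cH * ((ρ a) ^ k * (ρ dH)⁻¹ ^ 2)⁻¹ := by
      have := congrArg ρ (conjH k)
      simpa using this
    rw [hconj, oi_mul_apply, oi_mul_apply, oi_inv_apply_apply, hce]
  -- pairwise commutation of the ρ (gH k)
  have commGm : ∀ k l : ℕ, k ≤ 11 → l ≤ 11 →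
      ∀ z, ρ (gH k) (ρ (gH l) z) = ρ (gH l) (ρ (gH k) z) := by
    intro k l hk hl z
    have hcm := congrArg ρ (commH k l hk hl)
    rw [map_mul, map_mul] at hcm
    rw [← oi_mul_apply, ← oi_mul_apply, hcm]
  -- OrdConnectedness of I
  have hIord : I.OrdConnected := by
    have : IsPreconnected I := by rw [hIdef]; exact isPreconnected_connectedComponentIn
    exact this.ordConnected
  -- common fixed point of ρ (gH 0), ..., ρ (gH 11) in I
  have key : ∀ n : ℕ, n ≤ 12 → ∃ q ∈ I, ∀ k, k < n → ρ (gH k) q = q := by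
    intro n
    induction n with
    | zero => exact fun _ => ⟨x, hxI, fun k hk => absurd hk (Nat.not_lt_zero k)⟩
    | succ n ih =>
      intro hn
      obtain ⟨q0, hq0I, hq0⟩ := ih (by omega)
      obtain ⟨e', he'I, he'⟩ := hGfix n
      obtain ⟨q, hqI, hgq, hq⟩ := step_fix hIord (ρ (gH n)) hq0I he'I he'
      refine ⟨q, hqI, fun k hk => ?_⟩
      rcases Nat.lt_succ_iff_lt_or_eq.mp hk with hk' | rfl
      · exact hq (ρ (gH k)) (hq0 k hk') (fun z => commGm k n (by omega) (by omega) z)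
      · exact hgq
  obtain ⟨q, hqI, hq⟩ := key 12 le_rfl
  -- β fixes q
  have hBq : ρ b q = q := by
    have hρb : ρ b = ((List.range 12).map fun k => (ρ (gH k)) ^ 2).prod := by
      rw [hbprodH, map_list_prod, List.map_map]
      have hfun : (⇑ρ ∘ fun k => gH k ^ 2) = fun k => (ρ (gH k)) ^ 2 := by
        funext k
        simp [Function.comp, map_pow]
      rw [hfun]
    rw [hρb]
    apply oi_list_prod_fix
    intro f hf
    rw [List.mem_map] at hf
    obtain ⟨k, hk, rfl⟩ := hf
    have hk12 : k < 12 := List.mem_range.mp hk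
    rw [pow_two, oi_mul_apply, hq k hk12]
    exact hq k hk12
  -- β commutes with α pointwise
  have hABcomm : ∀ z, ρ b (ρ a z) = ρ a (ρ b z) := by
    have hcm := congrArg ρ commBAH
    rw [map_mul, map_mul] at hcm
    intro z
    rw [← oi_mul_apply, ← oi_mul_apply, hcm]
  -- the orbit of q under ρ a
  have hpow_apply : ∀ (n : ℕ) (z : ℝ), ((ρ a) ^ (n + 1)) z = ((ρ a) ^ n) (ρ a z) := by
    intro n z
    rw [pow_succ, oi_mul_apply]
  have hpow_apply' : ∀ (n : ℕ) (z : ℝ), ((ρ a) ^ (n + 1)) z = ρ a (((ρ a) ^ n) z) := by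
    intro n z
    rw [pow_succ', oi_mul_apply]
  have horbI : ∀ n : ℕ, ((ρ a) ^ n) q ∈ I := fun n => memI _ (goodPow _ goodA n) q hqI
  have horbfix : ∀ n : ℕ, ρ b (((ρ a) ^ n) q) = ((ρ a) ^ n) q := by
    intro n
    induction n with
    | zero =>
      rw [pow_zero]
      exact hBq
    | succ n ih =>
      rw [hpow_apply', hABcomm, ih]
  have hq_ne : ρ a q ≠ q := by
    have hsub : I ⊆ S := by rw [hIdef]; exact connectedComponentIn_subset S x
    exact hsub hqI
  have hinj2 : Function.Injective fun n : ℕ => ((ρ a) ^ n) q := by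
    rcases hq_ne.lt_or_gt with hlt | hgt
    · have hanti : StrictAnti fun n : ℕ => ((ρ a) ^ n) q :=
        strictAnti_nat_of_succ_lt fun n => by
          rw [hpow_apply]
          exact ((ρ a) ^ n).strictMono hlt
      exact hanti.injective
    · have hmono : StrictMono fun n : ℕ => ((ρ a) ^ n) q :=
        strictMono_nat_of_lt_succ fun n => by
          rw [hpow_apply]
          exact ((ρ a) ^ n).strictMono hgt
      exact hmono.injective
  apply Set.infinite_of_injective_forall_mem hinj2
  intro n
  exact ⟨horbI n, horbfix n⟩
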